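/- Let n ≥ 2 and m ≥ 3 be integers and let P₂ be the lazy nearest-neighbor measure on (ℤ/mℤ)^n given by P₂(0) = 1/2, P₂(e_i) = P₂(−e_i) = 1/(4n) for each standard generator e_i (1 ≤ i ≤ n), and P₂(g) = 0 otherwise. Then for every real c > 0 and every natural number l with l ≥ (m²/2)·((n+1)·log(m·n) + c·(n+1)) (log denoting natural logarithm), one has 4·‖P₂^{*l} − U‖²_TV ≤ (1 + 1/nⁿ)·e^{−c}. -/

import Mathlib

open Finset

/-- Convolution of two real-valued measures on a finite additive group. -/
noncomputable def convolve {G : Type*} [Fintype G] [AddGroup G] (μ ν : G → ℝ) : G → ℝ :=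
  fun g => ∑ h : G, μ h * ν (g - h)

/-- `l`-fold self-convolution of a measure (the `l = 0` case is the point mass at `0`). -/
noncomputable def convPow {G : Type*} [Fintype G] [AddGroup G] [DecidableEq G]
    (μ : G → ℝ) : ℕ → G → ℝ
  | 0 => fun g => if g = 0 then 1 else 0
  | l + 1 => convolve μ (convPow μ l)

/-- Total variation distance between two measures on a finite set. -/
noncomputable def tvDist {G : Type*} [Fintype G] (μ ν : G → ℝ) : ℝ :=
  (∑ g : G, |μ g - ν g|) / 2

/-- The uniform distribution on a finite set. -/
noncomputable def unif (G : Type*) [Fintype G] : G → ℝ :=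
  fun _ => 1 / (Fintype.card G)

/-- The lazy nearest-neighbor walk on `(ℤ/mℤ)^n`:
`P₂ 0 = 1/2`, `P₂(± e_i) = 1/(4n)`, and `P₂ = 0` elsewhere. -/
noncomputable def lazyNN (n m : ℕ) : (Fin n → ZMod m) → ℝ := fun g =>
  if g = 0 then 1 / 2
  else if ∃ i : Fin n, g = Pi.single i 1 ∨ g = -Pi.single i 1 then 1 / (4 * n)
  else 0

namespace Stmt19

open Complex ZMod AddChar

variable {n m : ℕ} [NeZero m]

noncomputable def chi (x g : Fin n → ZMod m) : ℂ := ∏ i, stdAddChar (x i * g i)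

lemma chi_comm (x g : Fin n → ZMod m) : chi x g = chi g x := by
  unfold chi; simp_rw [mul_comm]

lemma chi_add (x g h : Fin n → ZMod m) : chi x (g + h) = chi x g * chi x h := by
  unfold chi
  rw [← Finset.prod_mul_distrib]
  refine Finset.prod_congr rfl fun i _ => ?_
  rw [Pi.add_apply, mul_add, map_add_eq_mul]

lemma chi_zero (x : Fin n → ZMod m) : chi x 0 = 1 := by
  unfold chi; simp

lemma abs_stdAddChar (s : ZMod m) : ‖stdAddChar s‖ = 1 := by
  rw [stdAddChar_apply]; exact Circle.norm_coe _

lemma conj_stdAddChar (s : ZMod m) : (starRingEnd ℂ) (stdAddChar s) = stdAddChar (-s) := by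
  rw [map_neg_eq_inv, Complex.inv_eq_conj (abs_stdAddChar s)]

lemma conj_chi (x g : Fin n → ZMod m) : (starRingEnd ℂ) (chi x g) = chi x (-g) := by
  unfold chi
  rw [map_prod]
  refine Finset.prod_congr rfl fun i _ => ?_
  rw [conj_stdAddChar, Pi.neg_apply, ← mul_neg]

lemma sum_single_char (t : ZMod m) :
    ∑ s : ZMod m, stdAddChar (t * s) = if t = 0 then (m : ℂ) else 0 := by
  split_ifs with h
  · simp [h, ZMod.card]
  · simpa only [mulShift_apply] using sum_eq_zero_of_ne_one (isPrimitive_stdAddChar m h)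

lemma sum_chi (x : Fin n → ZMod m) :
    ∑ g : Fin n → ZMod m, chi x g = if x = 0 then ((m : ℂ)) ^ n else 0 := by
  unfold chi
  rw [← Fintype.prod_sum (fun (i : Fin n) (s : ZMod m) => stdAddChar (x i * s))]
  simp_rw [sum_single_char]
  split_ifs with h
  · rw [Finset.prod_congr rfl fun i _ => if_pos (by rw [h]; rfl)]
    simp
  · obtain ⟨i, hi⟩ := Function.ne_iff.mp h
    exact Finset.prod_eq_zero (Finset.mem_univ i) (if_neg hi)

noncomputable def hat (μ : (Fin n → ZMod m) → ℝ) (x : Fin n → ZMod m) : ℂ :=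
  ∑ g, (μ g : ℂ) * chi x g

lemma hat_convolve (μ ν : (Fin n → ZMod m) → ℝ) (x : Fin n → ZMod m) :
    hat (convolve μ ν) x = hat μ x * hat ν x := by
  unfold hat convolve
  push_cast
  simp_rw [Finset.sum_mul]
  rw [Finset.sum_comm]
  refine Finset.sum_congr rfl fun h _ => ?_
  rw [Finset.mul_sum]
  refine Fintype.sum_equiv (Equiv.subRight h) _ _ fun g => ?_
  simp only [Equiv.subRight_apply]
  rw [show chi x g = chi x (g - h) * chi x h by rw [← chi_add, sub_add_cancel]]
  ring

lemma hat_convPow (μ : (Fin n → ZMod m) → ℝ) (l : ℕ) (x : Fin n → ZMod m) :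
    hat (convPow μ l) x = (hat μ x) ^ l := by
  induction l with
  | zero =>
      unfold hat convPow
      simp [apply_ite, ite_mul, chi_zero]
  | succ l ih => rw [convPow, hat_convolve, ih, pow_succ, mul_comm]

lemma hat_unif (x : Fin n → ZMod m) :
    hat (unif (Fin n → ZMod m)) x = if x = 0 then 1 else 0 := by
  unfold hat unif
  rw [← Finset.mul_sum, sum_chi]
  have hcard : (Fintype.card (Fin n → ZMod m) : ℂ) = (m : ℂ) ^ n := by
    simp [ZMod.card]
  have hm0 : ((m : ℂ)) ^ n ≠ 0 :=
    pow_ne_zero _ (Nat.cast_ne_zero.mpr (NeZero.ne m))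
  push_cast
  rw [hcard]
  split_ifs
  · field_simp
  · simp

lemma hat_sub (μ ν : (Fin n → ZMod m) → ℝ) (x : Fin n → ZMod m) :
    hat (fun g => μ g - ν g) x = hat μ x - hat ν x := by
  unfold hat
  rw [← Finset.sum_sub_distrib]
  refine Finset.sum_congr rfl fun g _ => ?_
  push_cast
  ring

lemma sum_normSq_hat (f : (Fin n → ZMod m) → ℝ) :
    ∑ x, Complex.normSq (hat f x) = (m : ℝ) ^ n * ∑ g, (f g) ^ 2 := by
  have key : ∑ x : Fin n → ZMod m, hat f x * (starRingEnd ℂ) (hat f x)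
      = (m : ℂ) ^ n * ∑ g, ((f g : ℂ)) ^ 2 := by
    unfold hat
    have conjsum : ∀ x : Fin n → ZMod m,
        (starRingEnd ℂ) (∑ g, (f g : ℂ) * chi x g) = ∑ h, (f h : ℂ) * chi x (-h) := by
      intro x
      rw [map_sum]
      exact Finset.sum_congr rfl fun h _ => by rw [map_mul, conj_chi, Complex.conj_ofReal]
    simp_rw [conjsum, Finset.sum_mul_sum]
    have term : ∀ x g h : Fin n → ZMod m,
        (f g : ℂ) * chi x g * ((f h : ℂ) * chi x (-h)) = (f g : ℂ) * (f h) * chi x (g - h) := by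
      intro x g h
      rw [sub_eq_add_neg, chi_add]
      ring
    simp_rw [term]
    rw [Finset.sum_comm]
    have inner : ∀ g : Fin n → ZMod m,
        ∑ x : Fin n → ZMod m, ∑ h : Fin n → ZMod m, (f g : ℂ) * (f h) * chi x (g - h)
        = (f g : ℂ) ^ 2 * (m : ℂ) ^ n := by
      intro g
      rw [Finset.sum_comm]
      have : ∀ h : Fin n → ZMod m,
          ∑ x : Fin n → ZMod m, (f g : ℂ) * (f h) * chi x (g - h)
          = (f g : ℂ) * (f h) * (if g - h = 0 then ((m:ℂ))^n else 0) := by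
        intro h
        rw [← Finset.mul_sum]
        congr 1
        calc ∑ x : Fin n → ZMod m, chi x (g - h) = ∑ x, chi (g - h) x :=
              Finset.sum_congr rfl fun x _ => chi_comm x (g - h)
          _ = _ := sum_chi (g - h)
      simp_rw [this, sub_eq_zero, mul_ite, mul_zero]
      rw [Finset.sum_ite_eq Finset.univ g (fun h => (f g : ℂ) * (f h) * ((m:ℂ))^n)]
      simp [sq]
    simp_rw [inner]
    rw [← Finset.sum_mul]
    ring
  have key2 := key
  simp_rw [Complex.mul_conj] at key2
  exact_mod_cast key2

section distinct
variable (hm : 3 ≤ m)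
include hm

lemma one_ne_zero' : (1 : ZMod m) ≠ 0 := by
  have : ((1 : ℕ) : ZMod m) ≠ 0 := by
    rw [Ne, ZMod.natCast_eq_zero_iff]
    exact fun h => by have := Nat.le_of_dvd one_pos h; omega
  simpa using this

lemma two_ne_zero' : (2 : ZMod m) ≠ 0 := by
  have : ((2 : ℕ) : ZMod m) ≠ 0 := by
    rw [Ne, ZMod.natCast_eq_zero_iff]
    exact fun h => by have := Nat.le_of_dvd two_pos h; omega
  simpa using this

lemma single_ne_zero' (i : Fin n) : (Pi.single i 1 : Fin n → ZMod m) ≠ 0 := by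
  intro h
  exact one_ne_zero' hm (by simpa using congrFun h i)

lemma single_ne_neg (i j : Fin n) : (Pi.single i 1 : Fin n → ZMod m) ≠ -Pi.single j 1 := by
  intro h
  have hi := congrFun h i
  simp only [Pi.neg_apply, Pi.single_eq_same] at hi
  by_cases hij : i = j
  · subst hij
    rw [Pi.single_eq_same] at hi
    exact two_ne_zero' hm (by linear_combination hi)
  · rw [Pi.single_eq_of_ne hij] at hi
    exact one_ne_zero' hm (by simpa using hi)

lemma single_inj' {i j : Fin n} (h : (Pi.single i 1 : Fin n → ZMod m) = Pi.single j 1) :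
    i = j := by
  by_contra hij
  have hi := congrFun h i
  rw [Pi.single_eq_same, Pi.single_eq_of_ne hij] at hi
  exact one_ne_zero' hm hi

lemma sum_lazy (w : (Fin n → ZMod m) → ℂ) :
    ∑ g, (lazyNN n m g : ℂ) * w g
      = (1/2) * w 0 + (1/(4*(n:ℂ))) * ∑ i, (w (Pi.single i 1) + w (-Pi.single i 1)) := by
  have hpt : ∀ g : Fin n → ZMod m, (lazyNN n m g : ℂ) * w g =
      (if g = 0 then (1/2 : ℂ) * w 0 else 0) +
      ∑ i, ((if g = Pi.single i 1 then (1/(4*(n:ℂ))) * w (Pi.single i 1) else 0) +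
            (if g = -Pi.single i 1 then (1/(4*(n:ℂ))) * w (-Pi.single i 1) else 0)) := by
    intro g
    by_cases hg0 : g = 0
    · subst hg0
      have h1 : ∀ i : Fin n, (0 : Fin n → ZMod m) ≠ Pi.single i 1 :=
        fun i => (single_ne_zero' hm i).symm
      have h2 : ∀ i : Fin n, (0 : Fin n → ZMod m) ≠ -Pi.single i 1 := by
        intro i h
        exact single_ne_zero' hm i (by simpa using (congrArg Neg.neg h).symm)
      simp only [lazyNN, if_pos rfl]
      rw [Finset.sum_eq_zero (fun i _ => by rw [if_neg (h1 i), if_neg (h2 i), add_zero])]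
      push_cast
      ring
    · by_cases hex : ∃ i : Fin n, g = Pi.single i 1 ∨ g = -Pi.single i 1
      · obtain ⟨i, hi⟩ := hex
        have hlz : (lazyNN n m g : ℂ) = 1/(4*(n:ℂ)) := by
          simp only [lazyNN]
          rw [if_neg hg0, if_pos ⟨i, hi⟩]
          push_cast
          ring
        rw [hlz, if_neg hg0, zero_add]
        rcases hi with hi | hi
        · subst hi
          rw [Finset.sum_eq_single i]
          · rw [if_pos rfl, if_neg (single_ne_neg hm i i), add_zero]
          · intro j _ hji
            rw [if_neg (fun h => hji (single_inj' hm h).symm),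
              if_neg (single_ne_neg hm i j), add_zero]
          · intro h; exact absurd (Finset.mem_univ i) h
        · subst hi
          rw [Finset.sum_eq_single i]
          · rw [if_neg (fun h => single_ne_neg hm i i h.symm),
              if_pos rfl, zero_add]
          · intro j _ hji
            rw [if_neg (fun h => single_ne_neg hm j i h.symm),
              if_neg (fun h => hji (single_inj' hm (neg_inj.mp h)).symm), add_zero]
          · intro h; exact absurd (Finset.mem_univ i) h
      · simp only [lazyNN]
        rw [if_neg hg0, if_neg hex, if_neg hg0]
        rw [Finset.sum_eq_zero (fun i _ => by
          rw [if_neg (fun h => hex ⟨i, Or.inl h⟩), if_neg (fun h => hex ⟨i, Or.inr h⟩),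
            add_zero])]
        push_cast
        ring
  rw [Finset.sum_congr rfl (fun g _ => hpt g), Finset.sum_add_distrib]
  rw [Finset.sum_ite_eq' Finset.univ (0 : Fin n → ZMod m) (fun _ => (1/2 : ℂ) * w 0)]
  rw [Finset.sum_comm]
  simp only [Finset.mem_univ, if_true]
  congr 1
  rw [Finset.mul_sum]
  refine Finset.sum_congr rfl fun i _ => ?_
  rw [Finset.sum_add_distrib,
    Finset.sum_ite_eq' Finset.univ (Pi.single i 1)
      (fun _ => (1/(4*(n:ℂ))) * w (Pi.single i 1)),
    Finset.sum_ite_eq' Finset.univ (-Pi.single i 1)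
      (fun _ => (1/(4*(n:ℂ))) * w (-Pi.single i 1))]
  simp only [Finset.mem_univ, if_true]
  ring

end distinct

noncomputable def lam (x : Fin n → ZMod m) : ℝ :=
  1/2 + (1/(2*(n:ℝ))) * ∑ i, (stdAddChar (x i)).re

lemma chi_single (x : Fin n → ZMod m) (i : Fin n) :
    chi x (Pi.single i 1) = stdAddChar (x i) := by
  rw [chi]
  rw [Finset.prod_eq_single i]
  · rw [Pi.single_eq_same, mul_one]
  · intro j _ hji
    rw [Pi.single_eq_of_ne hji, mul_zero, map_zero_eq_one]
  · intro h; exact absurd (Finset.mem_univ i) h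

lemma hat_lazy (hm : 3 ≤ m) (x : Fin n → ZMod m) :
    hat (lazyNN n m) x = ((lam x : ℝ) : ℂ) := by
  rw [hat, sum_lazy hm (chi x)]
  have h2 : ∀ i : Fin n, chi x (-Pi.single i 1) = (starRingEnd ℂ) (stdAddChar (x i)) := by
    intro i
    rw [← conj_chi, chi_single]
  simp_rw [chi_zero, chi_single, h2, Complex.add_conj]
  rw [lam]
  push_cast
  rw [← Finset.mul_sum]
  ring

open Real

lemma re_le_one (s : ZMod m) : (stdAddChar s).re ≤ 1 :=
  (Complex.re_le_norm _).trans (le_of_eq (abs_stdAddChar s))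

lemma neg_one_le_re (s : ZMod m) : -1 ≤ (stdAddChar s).re := by
  have h := Complex.abs_re_le_norm (stdAddChar s)
  rw [abs_stdAddChar] at h
  have := abs_le.mp h
  linarith [this.1]

lemma cos_aux {w M : ℝ} (h1 : 1 ≤ w) (h2 : 2*w ≤ M) : Real.cos (2*π*w/M) ≤ 1 - 8/M^2 := by
  have hM0 : (0:ℝ) < M := by linarith
  have hπ := Real.pi_pos
  have hθ : |2*π*w/M| ≤ π := by
    rw [_root_.abs_of_nonneg (by positivity)]
    rw [div_le_iff₀ hM0]
    nlinarith
  have hb := Real.cos_le_one_sub_mul_cos_sq hθ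
  refine hb.trans ?_
  have heq : 2/π^2 * (2*π*w/M)^2 = 8*w^2/M^2 := by
    field_simp
    ring
  rw [heq]
  have : 8/M^2 ≤ 8*w^2/M^2 := by
    apply div_le_div_of_nonneg_right ?_ (by positivity)
    · nlinarith
  linarith

lemma re_bound (hm : 3 ≤ m) {s : ZMod m} (hs : s ≠ 0) :
    (stdAddChar s).re ≤ 1 - 8/(m:ℝ)^2 := by
  have hv1 : 1 ≤ s.val := Nat.one_le_iff_ne_zero.mpr (fun h => hs (by
    rwa [← ZMod.val_eq_zero]))
  have hvm : s.val < m := ZMod.val_lt s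
  rw [stdAddChar_apply, ZMod.toCircle_apply]
  have harg : (2*(π:ℂ)*Complex.I*(s.val:ℂ)/(m:ℂ))
      = ((2*π*(s.val:ℝ)/(m:ℝ) : ℝ) : ℂ) * Complex.I := by
    push_cast
    ring
  rw [harg, Complex.exp_ofReal_mul_I_re]
  by_cases hcase : 2 * s.val ≤ m
  · exact cos_aux (by exact_mod_cast hv1) (by exact_mod_cast hcase)
  · push_neg at hcase
    have hm0 : (0:ℝ) < m := by positivity
    have key : 2*π*(s.val:ℝ)/(m:ℝ) = 2*π - 2*π*((m:ℝ) - s.val)/(m:ℝ) := by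
      field_simp
      ring
    rw [key, Real.cos_two_pi_sub]
    apply cos_aux
    · have hsm : (s.val:ℝ) + 1 ≤ (m:ℝ) := by exact_mod_cast hvm
      linarith
    · have : (m:ℝ) < 2 * s.val := by exact_mod_cast hcase
      linarith

lemma lam_le_one (hn : 1 ≤ n) (x : Fin n → ZMod m) : lam x ≤ 1 := by
  have hn0 : (0:ℝ) < n := by positivity
  have hsum : ∑ i, (stdAddChar (x i)).re ≤ n := by
    calc ∑ i, (stdAddChar (x i)).re ≤ ∑ _i : Fin n, (1:ℝ) :=
          Finset.sum_le_sum fun i _ => re_le_one (x i)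
      _ = n := by simp
  rw [lam]
  have h1 : (1/(2*(n:ℝ))) * ∑ i, (stdAddChar (x i)).re ≤ (1/(2*(n:ℝ))) * n :=
    mul_le_mul_of_nonneg_left hsum (by positivity)
  have h2 : (1/(2*(n:ℝ))) * n = 1/2 := by field_simp
  linarith

lemma lam_nonneg (hn : 1 ≤ n) (x : Fin n → ZMod m) : 0 ≤ lam x := by
  have hn0 : (0:ℝ) < n := by positivity
  have hsum : -(n:ℝ) ≤ ∑ i, (stdAddChar (x i)).re := by
    calc -(n:ℝ) = ∑ _i : Fin n, (-1 : ℝ) := by simp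
      _ ≤ _ := Finset.sum_le_sum fun i _ => neg_one_le_re (x i)
  rw [lam]
  have h1 : (1/(2*(n:ℝ))) * (-(n:ℝ)) ≤ (1/(2*(n:ℝ))) * ∑ i, (stdAddChar (x i)).re :=
    mul_le_mul_of_nonneg_left hsum (by positivity)
  have h2 : (1/(2*(n:ℝ))) * (-(n:ℝ)) = -(1/2) := by field_simp
  linarith

lemma lam_pow_le (hn : 1 ≤ n) (hm : 3 ≤ m) (l : ℕ) (x : Fin n → ZMod m) :
    (lam x ^ l)^2 ≤ ∏ i, (if x i = 0 then (1:ℝ)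
      else Real.exp (-(8 * l / ((n:ℝ) * (m:ℝ)^2)))) := by
  have hn0 : (0:ℝ) < n := by positivity
  have hm0 : (0:ℝ) < m := by positivity
  have h0 := lam_nonneg hn x
  have hle : lam x ≤ Real.exp (lam x - 1) := by
    have := Real.add_one_le_exp (lam x - 1)
    linarith
  have expand : (2*(l:ℝ))*(lam x - 1) = ∑ i, ((l:ℝ)/n)*((stdAddChar (x i)).re - 1) := by
    rw [lam]
    simp_rw [mul_sub]
    rw [Finset.sum_sub_distrib, ← Finset.mul_sum, Finset.sum_const, Finset.card_univ,
      Fintype.card_fin, nsmul_eq_mul]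
    field_simp
    ring
  have termwise : ∀ i : Fin n, ((l:ℝ)/n)*((stdAddChar (x i)).re - 1)
      ≤ (if x i = 0 then (0:ℝ) else -(8 * l / ((n:ℝ) * (m:ℝ)^2))) := by
    intro i
    split_ifs with h
    · have : (stdAddChar (x i)).re - 1 ≤ 0 := by linarith [re_le_one (x i)]
      exact mul_nonpos_of_nonneg_of_nonpos (by positivity) this
    · have hre := re_bound hm h
      have : (stdAddChar (x i)).re - 1 ≤ -(8/(m:ℝ)^2) := by linarith
      calc ((l:ℝ)/n)*((stdAddChar (x i)).re - 1) ≤ ((l:ℝ)/n) * (-(8/(m:ℝ)^2)) :=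
            mul_le_mul_of_nonneg_left this (by positivity)
        _ = -(8 * l / ((n:ℝ) * (m:ℝ)^2)) := by field_simp
  calc (lam x ^ l)^2 = lam x ^ (2*l) := by rw [← pow_mul, mul_comm (l) 2]
    _ ≤ Real.exp (lam x - 1) ^ (2*l) := pow_le_pow_left₀ h0 hle _
    _ = Real.exp ((2*(l:ℝ)) * (lam x - 1)) := by
        rw [← Real.exp_nat_mul]
        push_cast
        ring_nf
    _ ≤ Real.exp (∑ i, (if x i = 0 then (0:ℝ) else -(8 * l / ((n:ℝ) * (m:ℝ)^2)))) := by
        rw [Real.exp_le_exp, expand]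
        exact Finset.sum_le_sum fun i _ => termwise i
    _ = ∏ i, Real.exp (if x i = 0 then (0:ℝ) else -(8 * l / ((n:ℝ) * (m:ℝ)^2))) :=
        Real.exp_sum _ _
    _ = _ := Finset.prod_congr rfl fun i _ => by
        split_ifs
        · exact Real.exp_zero
        · rfl

lemma sum_prod_bound (a : ℝ) :
    ∑ x : Fin n → ZMod m, ∏ i, (if x i = 0 then (1:ℝ) else a)
      = (1 + ((m:ℝ) - 1)*a)^n := by
  rw [← Fintype.prod_sum (fun (_ : Fin n) (s : ZMod m) => if s = 0 then (1:ℝ) else a)]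
  have hs : ∑ s : ZMod m, (if s = 0 then (1:ℝ) else a) = 1 + ((m:ℝ)-1)*a := by
    have hrw : ∀ s : ZMod m, (if s = 0 then (1:ℝ) else a)
        = (if s = 0 then 1 - a else 0) + a := by
      intro s; split_ifs <;> ring
    simp_rw [hrw]
    rw [Finset.sum_add_distrib, Finset.sum_ite_eq' Finset.univ (0 : ZMod m) (fun _ => 1 - a),
      Finset.sum_const, Finset.card_univ, ZMod.card, nsmul_eq_mul]
    simp only [Finset.mem_univ, if_true]
    ring
  rw [Finset.prod_congr rfl fun i _ => hs, Finset.prod_const, Finset.card_univ,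
    Fintype.card_fin]

set_option maxHeartbeats 1000000 in
lemma final_arith (hn : 2 ≤ n) (hm : 3 ≤ m) (c : ℝ) (hc : 0 < c) (l : ℕ)
    (hl : ((m : ℝ) ^ 2 / 2) * (((n : ℝ) + 1) * Real.log (m * n) + c * ((n : ℝ) + 1)) ≤ (l : ℝ)) :
    (1 + ((m:ℝ) - 1) * Real.exp (-(8 * l / ((n:ℝ) * (m:ℝ)^2))))^n - 1 ≤ Real.exp (-c) := by
  have hn0 : (0:ℝ) < n := by positivity
  have hm0 : (0:ℝ) < m := by positivity
  have hm3 : (3:ℝ) ≤ (m:ℝ) := by exact_mod_cast hm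
  have hn2 : (2:ℝ) ≤ (n:ℝ) := by exact_mod_cast hn
  have hmn6 : (6:ℝ) ≤ (m:ℝ)*(n:ℝ) := by
    have : (6:ℕ) ≤ m*n := Nat.mul_le_mul hm hn
    exact_mod_cast this
  have hL : (0:ℝ) ≤ Real.log ((m:ℝ)*(n:ℝ)) := Real.log_nonneg (by linarith)
  set L := Real.log ((m:ℝ)*(n:ℝ)) with hLdef
  have hstep1 : 4*(L + c) ≤ 8 * (l:ℝ) / ((n:ℝ)*(m:ℝ)^2) := by
    have hl' : ((m:ℝ)^2/2) * ((n:ℝ)+1) * (L + c) ≤ (l:ℝ) := by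
      calc ((m:ℝ)^2/2) * ((n:ℝ)+1) * (L + c)
          = ((m : ℝ) ^ 2 / 2) * (((n : ℝ) + 1) * Real.log ((m*n:ℕ)) + c * ((n : ℝ) + 1)) := by
            push_cast
            ring
        _ ≤ (l:ℝ) := by
            convert hl using 3
            push_cast
            ring
    rw [le_div_iff₀ (by positivity)]
    nlinarith [hl', mul_nonneg (add_nonneg hL hc.le) (sq_nonneg (m:ℝ))]
  have a_le : Real.exp (-(8 * l / ((n:ℝ) * (m:ℝ)^2))) ≤ Real.exp (-(4*(L+c))) :=
    Real.exp_le_exp.mpr (by linarith)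
  have hexpL : Real.exp L = (m:ℝ)*(n:ℝ) := Real.exp_log (by linarith)
  have hA : Real.exp (-(4*(L+c))) = Real.exp (-(4*c)) / ((m:ℝ)*(n:ℝ))^4 := by
    have hpow4 : ((m:ℝ)*(n:ℝ))^4 = Real.exp (4*L) := by
      rw [← hexpL, ← Real.exp_nat_mul]
      norm_num
    rw [hpow4, ← Real.exp_sub]
    congr 1
    ring
  set a := Real.exp (-(8 * l / ((n:ℝ) * (m:ℝ)^2))) with hadef
  set b := ((m:ℝ) - 1) * a with hbdef
  have ha0 : 0 < a := Real.exp_pos _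
  have hb0 : 0 ≤ b := mul_nonneg (by linarith) ha0.le
  set t := (n:ℝ) * b with htdef
  have ht0 : 0 ≤ t := mul_nonneg hn0.le hb0
  have hec1 : Real.exp (-(4*c)) ≤ Real.exp (-c) := Real.exp_le_exp.mpr (by linarith)
  have hec2 : Real.exp (-c) ≤ 1 := Real.exp_le_one_iff.mpr (by linarith)
  have ht216 : t ≤ Real.exp (-c) / 216 := by
    have h1 : t ≤ (n:ℝ) * ((m:ℝ)) * a := by
      rw [htdef, hbdef]
      nlinarith
    have h2 : a ≤ Real.exp (-(4*c)) / ((m:ℝ)*(n:ℝ))^4 := by rw [hadef]; rw [← hA]; exact a_le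
    have h3 : (n:ℝ) * (m:ℝ) * a ≤ (n:ℝ)*(m:ℝ)* (Real.exp (-(4*c)) / ((m:ℝ)*(n:ℝ))^4) :=
      mul_le_mul_of_nonneg_left h2 (by positivity)
    have h4 : (n:ℝ)*(m:ℝ)* (Real.exp (-(4*c)) / ((m:ℝ)*(n:ℝ))^4)
        = Real.exp (-(4*c)) / ((m:ℝ)*(n:ℝ))^3 := by
      field_simp
    have h6 : (216:ℝ) ≤ ((m:ℝ)*(n:ℝ))^3 := by
      have := pow_le_pow_left₀ (by norm_num : (0:ℝ) ≤ 6) hmn6 3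
      norm_num at this
      linarith
    have h5 : Real.exp (-(4*c)) / ((m:ℝ)*(n:ℝ))^3 ≤ Real.exp (-c) / 216 := by
      apply div_le_div₀ (Real.exp_pos _).le hec1 (by norm_num) h6
    linarith
  have htle : t ≤ 1/216 := by
    have : Real.exp (-c)/216 ≤ 1/216 := by linarith
    linarith
  have hpow : (1 + b)^n ≤ Real.exp t := by
    calc (1+b)^n ≤ (Real.exp b)^n := by
          apply pow_le_pow_left₀ (by linarith)
          linarith [Real.add_one_le_exp b]
      _ = Real.exp t := by
          rw [← Real.exp_nat_mul, htdef]
  have hexp1 : Real.exp t - 1 ≤ t * Real.exp t := by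
    have h := Real.add_one_le_exp (-t)
    have hp := Real.exp_pos t
    have : (1 - t) * Real.exp t ≤ Real.exp (-t) * Real.exp t :=
      mul_le_mul_of_nonneg_right (by linarith) hp.le
    rw [← Real.exp_add] at this
    simp at this
    nlinarith
  have hfin : t * Real.exp t ≤ Real.exp (-c) := by
    have he : Real.exp t ≤ 3 := by
      calc Real.exp t ≤ Real.exp 1 := Real.exp_le_exp.mpr (by linarith)
        _ ≤ 3 := by linarith [Real.exp_one_lt_d9]
    calc t * Real.exp t ≤ (Real.exp (-c)/216) * 3 := by
          apply mul_le_mul ht216 he (Real.exp_pos t).le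
            (div_nonneg (Real.exp_pos _).le (by norm_num))
      _ ≤ Real.exp (-c) := by nlinarith [Real.exp_pos (-c)]
  linarith [hpow, hexp1, hfin]

end Stmt19

open Stmt19 in
/-- Comparison-theory upper bound for the lazy nearest-neighbor walk on `(ℤ/mℤ)^n`. -/
theorem stmt_19 (n m : ℕ) [NeZero m] (hn : 2 ≤ n) (hm : 3 ≤ m)
    (c : ℝ) (hc : 0 < c) (l : ℕ)
    (hl : ((m : ℝ) ^ 2 / 2) * (((n : ℝ) + 1) * Real.log (m * n) + c * ((n : ℝ) + 1)) ≤ (l : ℝ)) :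
    4 * (tvDist (convPow (lazyNN n m) l) (unif (Fin n → ZMod m))) ^ 2
      ≤ (1 + 1 / (n : ℝ) ^ n) * Real.exp (-c) := by
  classical
  have hn1 : 1 ≤ n := by omega
  have hn0 : (0:ℝ) < n := by positivity
  set d : (Fin n → ZMod m) → ℝ :=
    fun g => convPow (lazyNN n m) l g - unif (Fin n → ZMod m) g with hd
  set a : ℝ := Real.exp (-(8 * l / ((n:ℝ) * (m:ℝ)^2))) with hadef
  have hA : 4 * (tvDist (convPow (lazyNN n m) l) (unif (Fin n → ZMod m)))^2
      = (∑ g, |d g|)^2 := by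
    rw [tvDist]
    ring
  have hB : (∑ g, |d g|)^2 ≤ (m:ℝ)^n * ∑ g, (d g)^2 := by
    have hcs := sq_sum_le_card_mul_sum_sq
      (s := (Finset.univ : Finset (Fin n → ZMod m))) (f := fun g => |d g|)
    simp_rw [sq_abs] at hcs
    have hcard : ((Finset.univ : Finset (Fin n → ZMod m)).card : ℝ) = (m:ℝ)^n := by
      simp [Finset.card_univ, ZMod.card]
    calc (∑ g, |d g|)^2
        ≤ ((Finset.univ : Finset (Fin n → ZMod m)).card : ℝ) * ∑ g, (d g)^2 := hcs
      _ = (m:ℝ)^n * ∑ g, (d g)^2 := by rw [hcard]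
  have hC : (m:ℝ)^n * ∑ g, (d g)^2 = ∑ x, Complex.normSq (hat d x) :=
    (sum_normSq_hat d).symm
  have hhat : ∀ x : Fin n → ZMod m,
      hat d x = ((lam x : ℝ) : ℂ)^l - (if x = 0 then 1 else 0) := by
    intro x
    rw [hd]
    rw [hat_sub, hat_convPow, hat_lazy hm, hat_unif]
  have lam0 : lam (0 : Fin n → ZMod m) = 1 := by
    rw [lam]
    simp only [Pi.zero_apply, AddChar.map_zero_eq_one, Complex.one_re, Finset.sum_const,
      Finset.card_univ, Fintype.card_fin, nsmul_eq_mul, mul_one]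
    field_simp
    ring
  have hval : ∀ x : Fin n → ZMod m,
      Complex.normSq (hat d x) = if x = 0 then 0 else (lam x ^ l)^2 := by
    intro x
    rw [hhat x]
    split_ifs with h
    · subst h
      rw [lam0]
      simp
    · rw [sub_zero, ← Complex.ofReal_pow, Complex.normSq_ofReal, sq]
  have hE : ∑ x, Complex.normSq (hat d x) ≤ (1 + ((m:ℝ)-1)*a)^n - 1 := by
    calc ∑ x, Complex.normSq (hat d x)
        = ∑ x : Fin n → ZMod m, (if x = 0 then 0 else (lam x ^ l)^2) :=
          Finset.sum_congr rfl fun x _ => hval x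
      _ ≤ ∑ x : Fin n → ZMod m,
            ((∏ i, (if x i = 0 then (1:ℝ) else a)) - (if x = 0 then 1 else 0)) := by
          apply Finset.sum_le_sum
          intro x _
          split_ifs with h
          · subst h
            have hprod : ∏ i, (if (0 : Fin n → ZMod m) i = 0 then (1:ℝ) else a) = 1 := by
              simp
            rw [hprod]
            norm_num
          · rw [sub_zero]
            exact lam_pow_le hn1 hm l x
      _ = (1 + ((m:ℝ)-1)*a)^n - 1 := by
          rw [Finset.sum_sub_distrib, sum_prod_bound,
            Finset.sum_ite_eq' Finset.univ (0 : Fin n → ZMod m) (fun _ => (1:ℝ))]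
          simp
  have hF := final_arith hn hm c hc l hl
  have hlast : Real.exp (-c) ≤ (1 + 1/(n:ℝ)^n) * Real.exp (-c) := by
    have h1 : (0:ℝ) ≤ 1/(n:ℝ)^n := by positivity
    nlinarith [Real.exp_pos (-c)]
  rw [hA]
  calc (∑ g, |d g|)^2 ≤ (m:ℝ)^n * ∑ g, (d g)^2 := hB
    _ = ∑ x, Complex.normSq (hat d x) := hC
    _ ≤ (1 + ((m:ℝ)-1)*a)^n - 1 := hE
    _ ≤ Real.exp (-c) := hF
    _ ≤ (1 + 1/(n:ℝ)^n) * Real.exp (-c) := hlast
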